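/- Let X be a topological space, α an aperiodic homeomorphism of X, F a Banach function space on X satisfying condition Ω_α, and w a measurable positive function on X such that w and w⁻¹ = 1/w are bounded, so that T̃_{α,w}(f) = w·(f∘α) is an invertible bounded linear operator on F. Then the following are equivalent: (i) T̃_{α,w} is topologically Cesàro hyper-transitive on F; (ii) for each compact subset K of X there exist a sequence (E_k) of Borel subsets of K and a strictly increasing sequence (n_k) of natural numbers such that lim_{k→∞} ‖χ_{K∖E_k}‖_F = 0 and lim_{k→∞} ( sup_{x∈E_k} n_k·∏_{j=0}^{n_k−1} (w(α^j(x)))⁻¹ ) = 0 = lim_{k→∞} ( sup_{x∈E_k} n_k⁻¹·∏_{j=1}^{n_k} w(α^{−j}(x)) ). -/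

import Mathlib

open Filter Finset

/-- A bounded linear operator `T` on a complex normed space is *topologically Cesàro
hyper-transitive* if for every pair of nonempty open subsets `O₁, O₂` there exists a
strictly increasing sequence `(n_k)` of (positive) natural numbers such that
`n_k⁻¹ • T^{n_k}(O₁) ∩ O₂ ≠ ∅` for all `k`. -/
def IsCesaroHyperTransitive {E : Type*} [NormedAddCommGroup E] [NormedSpace ℂ E]
    (T : E →L[ℂ] E) : Prop :=
  ∀ O₁ O₂ : Set E, IsOpen O₁ → IsOpen O₂ → O₁.Nonempty → O₂.Nonempty →
    ∃ n : ℕ → ℕ, StrictMono n ∧ (∀ k, 1 ≤ n k) ∧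
      ∀ k, ∃ f ∈ O₁, ((n k : ℂ))⁻¹ • (T ^ n k) f ∈ O₂

set_option maxHeartbeats 2000000 in
/-- Characterization of topologically Cesàro hyper-transitive weighted composition operators on a
solid Banach function space `𝓕` (realized, via the injective linear map `ι`, as a space
of Borel measurable functions on `X`) satisfying condition `Ω_α`. -/
theorem cesaro_hyper_transitive_iff_weight_condition_solid
    {X : Type*} [TopologicalSpace X] [MeasurableSpace X] [BorelSpace X]
    {𝓕 : Type*} [NormedAddCommGroup 𝓕] [NormedSpace ℂ 𝓕] [CompleteSpace 𝓕]
    (ι : 𝓕 →ₗ[ℂ] (X → ℂ)) (hι_inj : Function.Injective ι)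
    (hι_meas : ∀ f : 𝓕, Measurable (ι f))
    (α : X ≃ₜ X)
    (haper : ∀ K : Set X, IsCompact K →
      ∃ N : ℕ, 0 < N ∧ ∀ n ≥ N, ((⇑α)^[n] '' K) ∩ K = ∅)
    -- `𝓕` is solid:
    (hsolid : ∀ (f : 𝓕) (g : X → ℂ), Measurable g →
      (∀ x, ‖g x‖ ≤ ‖ι f x‖) → ∃ g' : 𝓕, ι g' = g ∧ ‖g'‖ ≤ ‖f‖)
    -- `𝓕` is `α`-invariant:
    (hinv : ∀ f : 𝓕, ∃ f₁ f₂ : 𝓕,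
      ι f₁ = (ι f) ∘ ⇑α ∧ ‖f₁‖ = ‖f‖ ∧ ι f₂ = (ι f) ∘ ⇑α.symm ∧ ‖f₂‖ = ‖f‖)
    -- characteristic functions of compact sets belong to `𝓕`:
    (hchi : ∀ E : Set X, IsCompact E → ∃ g : 𝓕, ι g = Set.indicator E 1)
    -- bounded compactly supported elements are dense in `𝓕`:
    (hdense : Dense {f : 𝓕 | (∃ C, ∀ x, ‖ι f x‖ ≤ C) ∧
      ∃ K : Set X, IsCompact K ∧ ∀ x ∉ K, ι f x = 0})
    (w : X → ℝ) (hw_meas : Measurable w) (hw_pos : ∀ x, 0 < w x)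
    (hw_bdd : ∃ C, ∀ x, w x ≤ C) (hw_inv_bdd : ∃ C, ∀ x, (w x)⁻¹ ≤ C)
    (T S : 𝓕 →L[ℂ] 𝓕)
    (hT : ∀ (f : 𝓕) (x : X), ι (T f) x = (w x : ℂ) * ι f (α x))
    (hST : ∀ f, S (T f) = f) (hTS : ∀ f, T (S f) = f) :
    IsCesaroHyperTransitive T ↔
      ∀ K : Set X, IsCompact K →
        ∃ (E : ℕ → Set X) (n : ℕ → ℕ),
          (∀ k, MeasurableSet (E k)) ∧ (∀ k, E k ⊆ K) ∧
          StrictMono n ∧ (∀ k, 1 ≤ n k) ∧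
          (∃ g : ℕ → 𝓕, (∀ k, ι (g k) = Set.indicator (K \ E k) 1) ∧
            Tendsto (fun k => ‖g k‖) atTop (nhds 0)) ∧
          Tendsto (fun k =>
              sSup ((fun x => (n k : ℝ) *
                ∏ j ∈ range (n k), (w ((⇑α)^[j] x))⁻¹) '' E k))
            atTop (nhds 0) ∧
          Tendsto (fun k =>
              sSup ((fun x => ((n k : ℝ))⁻¹ *
                ∏ j ∈ Icc 1 (n k), w ((⇑α.symm)^[j] x)) '' E k))
            atTop (nhds 0) := by
  classical
  have hαm : Measurable (⇑α) := α.continuous.measurable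
  have hσm : Measurable (⇑α.symm) := α.symm.continuous.measurable
  have itgen : ∀ (β : X ≃ₜ X) (j : ℕ), ∀ n, j ≤ n → ∀ x,
      (⇑β.symm)^[j] ((⇑β)^[n] x) = (⇑β)^[n-j] x := by
    intro β j
    induction j with
    | zero => intro n _ x; simp
    | succ j ih =>
      intro n h x
      rw [Function.iterate_succ_apply', ih n (by omega)]
      obtain ⟨m, hm⟩ : ∃ m, n - j = m + 1 := ⟨n - j - 1, by omega⟩
      rw [hm, Function.iterate_succ_apply', Homeomorph.symm_apply_apply]
      congr 1; omega
  have itF : ∀ (j n : ℕ), j ≤ n → ∀ x, (⇑α)^[j] ((⇑α.symm)^[n] x) = (⇑α.symm)^[n-j] x := by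
    intro j n h x
    have := itgen α.symm j n h x
    rwa [Homeomorph.symm_symm] at this
  have cancelF : ∀ (n : ℕ) (x : X), (⇑α)^[n] ((⇑α.symm)^[n] x) = x := by
    intro n x; simpa using itF n n le_rfl x
  have cancelB : ∀ (n : ℕ) (x : X), (⇑α.symm)^[n] ((⇑α)^[n] x) = x := by
    intro n x; simpa using itgen α n n le_rfl x
  have pIcc : ∀ (g : ℕ → ℝ) (n : ℕ), ∏ j ∈ Icc 1 n, g j = ∏ j ∈ range n, g (j+1) := by
    intro g n
    induction n with
    | zero => simp
    | succ n ih => rw [Finset.prod_Icc_succ_top (by omega), ih, Finset.prod_range_succ]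
  have P1 : ∀ (n : ℕ) (x : X), ∏ j ∈ Icc 1 n, w ((⇑α.symm)^[j] ((⇑α)^[n] x))
      = ∏ j ∈ range n, w ((⇑α)^[j] x) := by
    intro n x
    rw [pIcc, ← Finset.prod_range_reflect (fun j => w ((⇑α)^[j] x)) n]
    apply Finset.prod_congr rfl
    intro j hj; rw [Finset.mem_range] at hj
    rw [itgen α (j+1) n (by omega)]
    rw [show n - (j+1) = n - 1 - j by omega]
  have P2 : ∀ (n : ℕ) (x : X), ∏ j ∈ range n, w ((⇑α)^[j] ((⇑α.symm)^[n] x))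
      = ∏ j ∈ Icc 1 n, w ((⇑α.symm)^[j] x) := by
    intro n x
    rw [pIcc, ← Finset.prod_range_reflect (fun j => w ((⇑α.symm)^[j+1] x)) n]
    apply Finset.prod_congr rfl
    intro j hj; rw [Finset.mem_range] at hj
    rw [itF j n (by omega)]
    rw [show n - 1 - j + 1 = n - j by omega]
  have hw0 : ∀ x : X, ((w x : ℝ) : ℂ) ≠ 0 := fun x => Complex.ofReal_ne_zero.mpr (hw_pos x).ne'
  have hTpow : ∀ (n : ℕ) (f : 𝓕) (x : X), ι ((T^n) f) x
      = (∏ j ∈ range n, ((w ((⇑α)^[j] x) : ℝ) : ℂ)) * ι f ((⇑α)^[n] x) := by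
    intro n
    induction n with
    | zero => intro f x; simp
    | succ n ih =>
      intro f x
      rw [pow_succ, ContinuousLinearMap.mul_apply, ih, hT, Finset.prod_range_succ,
        Function.iterate_succ_apply']
      ring
  have hS : ∀ (f : 𝓕) (x : X), ι (S f) x = ((w (α.symm x) : ℝ) : ℂ)⁻¹ * ι f (α.symm x) := by
    intro f x
    have h1 := hT (S f) (α.symm x)
    rw [hTS, Homeomorph.apply_symm_apply] at h1
    rw [h1, inv_mul_cancel_left₀ (hw0 _)]
  have hSpow : ∀ (n : ℕ) (f : 𝓕) (x : X), ι ((S^n) f) x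
      = (∏ j ∈ Icc 1 n, ((w ((⇑α.symm)^[j] x) : ℝ) : ℂ))⁻¹ * ι f ((⇑α.symm)^[n] x) := by
    intro n
    induction n with
    | zero => intro f x; simp
    | succ n ih =>
      intro f x
      rw [pow_succ, ContinuousLinearMap.mul_apply, ih, hS,
        show α.symm ((⇑α.symm)^[n] x) = (⇑α.symm)^[n+1] x from
          (Function.iterate_succ_apply' _ n x).symm,
        Finset.prod_Icc_succ_top (by omega), mul_inv]
      ring
  have hTSpow : ∀ (n : ℕ) (f : 𝓕), (T^n) ((S^n) f) = f := by
    intro n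
    induction n with
    | zero => intro f; simp
    | succ n ih =>
      intro f
      rw [pow_succ' T, pow_succ S, ContinuousLinearMap.mul_apply,
        ContinuousLinearMap.mul_apply, ih, hTS]
  have hdom : ∀ (f g : 𝓕), (∀ x, ‖ι g x‖ ≤ ‖ι f x‖) → ‖g‖ ≤ ‖f‖ := by
    intro f g h
    obtain ⟨g', hg', hn⟩ := hsolid f (ι g) (hι_meas g) h
    rwa [hι_inj hg'] at hn
  have hinvF : ∀ (f : 𝓕) (n : ℕ), ∃ f', ι f' = ι f ∘ (⇑α)^[n] ∧ ‖f'‖ = ‖f‖ := by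
    intro f n
    induction n with
    | zero => exact ⟨f, by funext x; simp, rfl⟩
    | succ n ih =>
      obtain ⟨f', h1, h2⟩ := ih
      obtain ⟨f₁, f₂, h3, h4, _, _⟩ := hinv f'
      refine ⟨f₁, ?_, h4.trans h2⟩
      rw [h3, h1]; funext x
      simp [Function.comp, Function.iterate_succ_apply]
  have hinvB : ∀ (f : 𝓕) (n : ℕ), ∃ f', ι f' = ι f ∘ (⇑α.symm)^[n] ∧ ‖f'‖ = ‖f‖ := by
    intro f n
    induction n with
    | zero => exact ⟨f, by funext x; simp, rfl⟩
    | succ n ih =>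
      obtain ⟨f', h1, h2⟩ := ih
      obtain ⟨f₁, f₂, _, _, h3, h4⟩ := hinv f'
      refine ⟨f₂, ?_, h4.trans h2⟩
      rw [h3, h1]; funext x
      simp [Function.comp, Function.iterate_succ_apply]
  have hcast : ∀ (s : Set X) (x : X), Set.indicator s (1 : X → ℂ) x
      = ((Set.indicator s (fun _ => (1:ℝ)) x : ℝ) : ℂ) := by
    intro s x; by_cases h : x ∈ s <;> simp [h]
  have hnn : ∀ (n : ℕ), ‖((n:ℕ):ℂ)‖ = (n:ℝ) := by
    intro n; simp
  constructor
  · -- (i) => (ii)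
    intro hCHT K hK
    obtain ⟨N, hNpos, hN⟩ := haper K hK
    obtain ⟨c, hc⟩ := hchi K hK
    have hKmeas : MeasurableSet K := by
      have hKeq : K = (ι c) ⁻¹' {1} := by
        ext x
        by_cases hx : x ∈ K <;> simp [hc, Set.indicator_apply, hx]
      rw [hKeq]; exact (hι_meas c) (measurableSet_singleton 1)
    have hGK : ∀ x ∈ K, ι c x = 1 := by
      intro x hx; simp [hc, Set.indicator_of_mem hx]
    have hGnot : ∀ x, x ∉ K → ι c x = 0 := by
      intro x hx; simp [hc, Set.indicator_of_notMem hx]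
    obtain ⟨δ, hδpos, hδto⟩ : ∃ δ : ℕ → ℝ, (∀ m, 0 < δ m) ∧ Tendsto δ atTop (nhds 0) :=
      ⟨fun m => ((m:ℝ)+1)⁻¹, fun m => by positivity,
        by simpa [one_div] using tendsto_one_div_add_atTop_nhds_zero_nat (𝕜 := ℝ)⟩
    have hεpos : ∀ m, 0 < δ m * δ m := fun m => mul_pos (hδpos m) (hδpos m)
    have key : ∀ (L : ℕ) (m : ℕ), ∃ p : ℕ × 𝓕, L < p.1 ∧ N ≤ p.1 ∧
        ‖p.2 - c‖ < δ m * δ m ∧ ‖(p.1:ℂ)⁻¹ • (T^p.1) p.2 - c‖ < δ m * δ m := by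
      intro L m
      obtain ⟨ns, hns, hns1, hprop⟩ := hCHT (Metric.ball c (δ m * δ m))
        (Metric.ball c (δ m * δ m)) Metric.isOpen_ball Metric.isOpen_ball
        ⟨c, Metric.mem_ball_self (hεpos m)⟩ ⟨c, Metric.mem_ball_self (hεpos m)⟩
      obtain ⟨f, hf1, hf2⟩ := hprop (L + N)
      refine ⟨⟨ns (L + N), f⟩, ?_, ?_, ?_, ?_⟩
      · calc L < L + N := by omega
          _ ≤ ns (L + N) := hns.le_apply
      · calc N ≤ L + N := by omega
          _ ≤ ns (L + N) := hns.le_apply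
      · rw [← dist_eq_norm]; exact Metric.mem_ball.mp hf1
      · rw [← dist_eq_norm]; exact Metric.mem_ball.mp hf2
    choose p hp1 hp2 hp3 hp4 using key
    obtain ⟨aux, haux0, hauxs⟩ : ∃ aux : ℕ → ℕ, aux 0 = 0 ∧
        ∀ m, aux (m+1) = (p (aux m) m).1 :=
      ⟨fun m => Nat.rec 0 (fun m ih => (p ih m).1) m, rfl, fun m => rfl⟩
    obtain ⟨nq, hnq⟩ : ∃ nq : ℕ → ℕ, ∀ m, nq m = (p (aux m) m).1 := ⟨_, fun m => rfl⟩
    obtain ⟨fq, hfq⟩ : ∃ fq : ℕ → 𝓕, ∀ m, fq m = (p (aux m) m).2 := ⟨_, fun m => rfl⟩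
    obtain ⟨hq, hhq⟩ : ∃ hq : ℕ → 𝓕, ∀ m, hq m = (nq m : ℂ)⁻¹ • (T^(nq m)) (fq m) :=
      ⟨_, fun m => rfl⟩
    have hauxn : ∀ m, aux (m+1) = nq m := fun m => by rw [hauxs, hnq]
    have hlt : ∀ m, aux m < nq m := fun m => by rw [hnq]; exact hp1 _ _
    have hmononq : StrictMono nq := by
      apply strictMono_nat_of_lt_succ
      intro m
      calc nq m = aux (m+1) := (hauxn m).symm
        _ < nq (m+1) := hlt (m+1)
    have h1le : ∀ m, 1 ≤ nq m := fun m => by have := hlt m; omega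
    have hNle : ∀ m, N ≤ nq m := fun m => by rw [hnq]; exact hp2 _ _
    have hf3 : ∀ m, ‖fq m - c‖ < δ m * δ m := fun m => by rw [hfq]; exact hp3 _ _
    have hf4 : ∀ m, ‖hq m - c‖ < δ m * δ m := fun m => by
      rw [hhq, hnq, hfq]; exact hp4 _ _
    have hout1 : ∀ (m : ℕ) (x : X), x ∈ K → (⇑α)^[nq m] x ∉ K := by
      intro m x hx hcon
      have h2 : (⇑α)^[nq m] x ∈ ((⇑α)^[nq m] '' K) ∩ K := ⟨Set.mem_image_of_mem _ hx, hcon⟩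
      rw [hN (nq m) (hNle m)] at h2
      exact h2
    have hout2 : ∀ (m : ℕ) (x : X), x ∈ K → (⇑α.symm)^[nq m] x ∉ K := by
      intro m x hx hcon
      have h2 := hout1 m _ hcon
      rw [cancelF] at h2
      exact h2 hx
    have hnormH : ∀ (m : ℕ) (x : X), ‖ι (hq m) x‖
        = ((nq m : ℝ))⁻¹ * (∏ j ∈ range (nq m), w ((⇑α)^[j] x))
          * ‖ι (fq m) ((⇑α)^[nq m] x)‖ := by
      intro m x
      have hP : (0:ℝ) < ∏ j ∈ range (nq m), w ((⇑α)^[j] x) :=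
        Finset.prod_pos fun j _ => hw_pos _
      rw [hhq, map_smul]
      simp only [Pi.smul_apply, smul_eq_mul]
      rw [hTpow, show (∏ j ∈ range (nq m), ((w ((⇑α)^[j] x) : ℝ) : ℂ))
          = ((∏ j ∈ range (nq m), w ((⇑α)^[j] x) : ℝ) : ℂ) by push_cast; ring,
        norm_mul, norm_mul, norm_inv, hnn, Complex.norm_real, Real.norm_eq_abs,
        abs_of_pos hP]
      ring
    obtain ⟨Es, hEs⟩ : ∃ Es : ℕ → Set X, ∀ m, Es m =
        {x | x ∈ K ∧ ‖ι (fq m) x - 1‖ < 2⁻¹ ∧ ‖ι (fq m) ((⇑α)^[nq m] x)‖ < δ m ∧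
          ‖ι (hq m) x - 1‖ < 2⁻¹ ∧ ‖ι (hq m) ((⇑α.symm)^[nq m] x)‖ < δ m} :=
      ⟨_, fun m => rfl⟩
    refine ⟨Es, nq, ?_, ?_, hmononq, h1le, ?_, ?_, ?_⟩
    · -- measurability
      intro m
      rw [hEs m]
      have heq : {x | x ∈ K ∧ ‖ι (fq m) x - 1‖ < 2⁻¹ ∧ ‖ι (fq m) ((⇑α)^[nq m] x)‖ < δ m ∧
          ‖ι (hq m) x - 1‖ < 2⁻¹ ∧ ‖ι (hq m) ((⇑α.symm)^[nq m] x)‖ < δ m}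
          = K ∩ ({x | ‖ι (fq m) x - 1‖ < 2⁻¹} ∩ ({x | ‖ι (fq m) ((⇑α)^[nq m] x)‖ < δ m} ∩
            ({x | ‖ι (hq m) x - 1‖ < 2⁻¹} ∩ {x | ‖ι (hq m) ((⇑α.symm)^[nq m] x)‖ < δ m}))) := by
        ext x
        constructor
        · rintro ⟨h0, h1, h2, h3, h4⟩; exact ⟨h0, h1, h2, h3, h4⟩
        · rintro ⟨h0, h1, h2, h3, h4⟩; exact ⟨h0, h1, h2, h3, h4⟩
      rw [heq]
      refine hKmeas.inter (MeasurableSet.inter ?_ (MeasurableSet.inter ?_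
        (MeasurableSet.inter ?_ ?_)))
      · exact measurableSet_lt (((hι_meas _).sub measurable_const).norm) measurable_const
      · exact measurableSet_lt (((hι_meas _).comp (hαm.iterate _)).norm) measurable_const
      · exact measurableSet_lt (((hι_meas _).sub measurable_const).norm) measurable_const
      · exact measurableSet_lt (((hι_meas _).comp (hσm.iterate _)).norm) measurable_const
    · -- subset
      intro m x hx
      rw [hEs m] at hx
      exact hx.1
    · -- the chi sequence
      have big : ∀ m, ∃ g : 𝓕, ι g = Set.indicator (K \ Es m) 1 ∧
          ‖g‖ ≤ 4 * (δ m * δ m) + 2 * δ m := by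
        intro m
        -- e1
        have pt1 : ∀ x, ‖Set.indicator (K ∩ {x | 2⁻¹ ≤ ‖ι (fq m) x - 1‖}) (1 : X → ℂ) x‖
            ≤ ‖ι ((2:ℂ) • (fq m - c)) x‖ := by
          intro x
          by_cases hx : x ∈ K ∩ {x | 2⁻¹ ≤ ‖ι (fq m) x - 1‖}
          · rw [Set.indicator_of_mem hx]
            rw [map_smul, map_sub]
            simp only [Pi.smul_apply, Pi.sub_apply, smul_eq_mul, Pi.one_apply, norm_one]
            rw [hGK x hx.1, norm_mul]
            have h2 : (2⁻¹ : ℝ) ≤ ‖ι (fq m) x - 1‖ := hx.2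
            have h3 : ‖(2:ℂ)‖ = 2 := by norm_num
            rw [h3]
            linarith
          · rw [Set.indicator_of_notMem hx, norm_zero]
            exact norm_nonneg _
        obtain ⟨e1, he1, he1n⟩ := hsolid ((2:ℂ) • (fq m - c)) _
          (measurable_one.indicator (hKmeas.inter (measurableSet_le measurable_const
            (((hι_meas _).sub measurable_const).norm)))) pt1
        -- e2
        obtain ⟨d2, hd2, hd2n⟩ := hinvF (fq m - c) (nq m)
        have pt2 : ∀ x, ‖Set.indicator (K ∩ {x | δ m ≤ ‖ι (fq m) ((⇑α)^[nq m] x)‖})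
            (1 : X → ℂ) x‖ ≤ ‖ι ((((δ m)⁻¹ : ℝ) : ℂ) • d2) x‖ := by
          intro x
          by_cases hx : x ∈ K ∩ {x | δ m ≤ ‖ι (fq m) ((⇑α)^[nq m] x)‖}
          · rw [Set.indicator_of_mem hx, map_smul]
            simp only [Pi.smul_apply, smul_eq_mul, Pi.one_apply, norm_one]
            rw [hd2]
            simp only [Function.comp_apply]
            rw [map_sub]
            simp only [Pi.sub_apply]
            rw [hGnot _ (hout1 m x hx.1), sub_zero, norm_mul, Complex.norm_real,
              Real.norm_eq_abs, abs_of_pos (inv_pos.mpr (hδpos m))]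
            have h2 : δ m ≤ ‖ι (fq m) ((⇑α)^[nq m] x)‖ := hx.2
            calc (1:ℝ) = (δ m)⁻¹ * δ m := (inv_mul_cancel₀ (hδpos m).ne').symm
              _ ≤ (δ m)⁻¹ * ‖ι (fq m) ((⇑α)^[nq m] x)‖ :=
                mul_le_mul_of_nonneg_left h2 (inv_pos.mpr (hδpos m)).le
          · rw [Set.indicator_of_notMem hx, norm_zero]
            exact norm_nonneg _
        obtain ⟨e2, he2, he2n⟩ := hsolid ((((δ m)⁻¹ : ℝ) : ℂ) • d2) _
          (measurable_one.indicator (hKmeas.inter (measurableSet_le measurable_const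
            (((hι_meas _).comp (hαm.iterate _)).norm)))) pt2
        -- e3
        have pt3 : ∀ x, ‖Set.indicator (K ∩ {x | 2⁻¹ ≤ ‖ι (hq m) x - 1‖}) (1 : X → ℂ) x‖
            ≤ ‖ι ((2:ℂ) • (hq m - c)) x‖ := by
          intro x
          by_cases hx : x ∈ K ∩ {x | 2⁻¹ ≤ ‖ι (hq m) x - 1‖}
          · rw [Set.indicator_of_mem hx]
            rw [map_smul, map_sub]
            simp only [Pi.smul_apply, Pi.sub_apply, smul_eq_mul, Pi.one_apply, norm_one]
            rw [hGK x hx.1, norm_mul]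
            have h2 : (2⁻¹ : ℝ) ≤ ‖ι (hq m) x - 1‖ := hx.2
            have h3 : ‖(2:ℂ)‖ = 2 := by norm_num
            rw [h3]
            linarith
          · rw [Set.indicator_of_notMem hx, norm_zero]
            exact norm_nonneg _
        obtain ⟨e3, he3, he3n⟩ := hsolid ((2:ℂ) • (hq m - c)) _
          (measurable_one.indicator (hKmeas.inter (measurableSet_le measurable_const
            (((hι_meas _).sub measurable_const).norm)))) pt3
        -- e4
        obtain ⟨d4, hd4, hd4n⟩ := hinvB (hq m - c) (nq m)
        have pt4 : ∀ x, ‖Set.indicator (K ∩ {x | δ m ≤ ‖ι (hq m) ((⇑α.symm)^[nq m] x)‖})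
            (1 : X → ℂ) x‖ ≤ ‖ι ((((δ m)⁻¹ : ℝ) : ℂ) • d4) x‖ := by
          intro x
          by_cases hx : x ∈ K ∩ {x | δ m ≤ ‖ι (hq m) ((⇑α.symm)^[nq m] x)‖}
          · rw [Set.indicator_of_mem hx, map_smul]
            simp only [Pi.smul_apply, smul_eq_mul, Pi.one_apply, norm_one]
            rw [hd4]
            simp only [Function.comp_apply]
            rw [map_sub]
            simp only [Pi.sub_apply]
            rw [hGnot _ (hout2 m x hx.1), sub_zero, norm_mul, Complex.norm_real,
              Real.norm_eq_abs, abs_of_pos (inv_pos.mpr (hδpos m))]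
            have h2 : δ m ≤ ‖ι (hq m) ((⇑α.symm)^[nq m] x)‖ := hx.2
            calc (1:ℝ) = (δ m)⁻¹ * δ m := (inv_mul_cancel₀ (hδpos m).ne').symm
              _ ≤ (δ m)⁻¹ * ‖ι (hq m) ((⇑α.symm)^[nq m] x)‖ :=
                mul_le_mul_of_nonneg_left h2 (inv_pos.mpr (hδpos m)).le
          · rw [Set.indicator_of_notMem hx, norm_zero]
            exact norm_nonneg _
        obtain ⟨e4, he4, he4n⟩ := hsolid ((((δ m)⁻¹ : ℝ) : ℂ) • d4) _
          (measurable_one.indicator (hKmeas.inter (measurableSet_le measurable_const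
            (((hι_meas _).comp (hσm.iterate _)).norm)))) pt4
        -- combine
        have ptsum : ∀ x, ‖Set.indicator (K \ Es m) (1 : X → ℂ) x‖
            ≤ ‖ι (e1 + e2 + e3 + e4) x‖ := by
          intro x
          rw [map_add, map_add, map_add]
          simp only [Pi.add_apply]
          rw [he1, he2, he3, he4, hcast, hcast, hcast, hcast, hcast,
            ← Complex.ofReal_add, ← Complex.ofReal_add, ← Complex.ofReal_add,
            Complex.norm_real, Complex.norm_real, Real.norm_eq_abs, Real.norm_eq_abs]
          have n1 : 0 ≤ Set.indicator (K ∩ {x | 2⁻¹ ≤ ‖ι (fq m) x - 1‖})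
              (fun _ => (1:ℝ)) x := Set.indicator_nonneg (fun _ _ => zero_le_one) x
          have n2 : 0 ≤ Set.indicator (K ∩ {x | δ m ≤ ‖ι (fq m) ((⇑α)^[nq m] x)‖})
              (fun _ => (1:ℝ)) x := Set.indicator_nonneg (fun _ _ => zero_le_one) x
          have n3 : 0 ≤ Set.indicator (K ∩ {x | 2⁻¹ ≤ ‖ι (hq m) x - 1‖})
              (fun _ => (1:ℝ)) x := Set.indicator_nonneg (fun _ _ => zero_le_one) x
          have n4 : 0 ≤ Set.indicator (K ∩ {x | δ m ≤ ‖ι (hq m) ((⇑α.symm)^[nq m] x)‖})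
              (fun _ => (1:ℝ)) x := Set.indicator_nonneg (fun _ _ => zero_le_one) x
          have nt : 0 ≤ Set.indicator (K \ Es m) (fun _ => (1:ℝ)) x :=
            Set.indicator_nonneg (fun _ _ => zero_le_one) x
          have hle : Set.indicator (K \ Es m) (fun _ => (1:ℝ)) x
              ≤ Set.indicator (K ∩ {x | 2⁻¹ ≤ ‖ι (fq m) x - 1‖}) (fun _ => (1:ℝ)) x
              + Set.indicator (K ∩ {x | δ m ≤ ‖ι (fq m) ((⇑α)^[nq m] x)‖}) (fun _ => (1:ℝ)) x
              + Set.indicator (K ∩ {x | 2⁻¹ ≤ ‖ι (hq m) x - 1‖}) (fun _ => (1:ℝ)) x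
              + Set.indicator (K ∩ {x | δ m ≤ ‖ι (hq m) ((⇑α.symm)^[nq m] x)‖})
                (fun _ => (1:ℝ)) x := by
            by_cases hx : x ∈ K \ Es m
            · simp only [Set.indicator_of_mem hx]
              obtain ⟨hxK, hxn⟩ := hx
              by_cases h1 : ‖ι (fq m) x - 1‖ < 2⁻¹
              · by_cases h2 : ‖ι (fq m) ((⇑α)^[nq m] x)‖ < δ m
                · by_cases h3 : ‖ι (hq m) x - 1‖ < 2⁻¹
                  · by_cases h4 : ‖ι (hq m) ((⇑α.symm)^[nq m] x)‖ < δ m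
                    · exfalso
                      apply hxn
                      rw [hEs m]
                      exact ⟨hxK, h1, h2, h3, h4⟩
                    · have m4 : x ∈ K ∩ {x | δ m ≤ ‖ι (hq m) ((⇑α.symm)^[nq m] x)‖} :=
                        ⟨hxK, not_lt.mp h4⟩
                      simp only [Set.indicator_of_mem m4]
                      linarith
                  · have m3 : x ∈ K ∩ {x | 2⁻¹ ≤ ‖ι (hq m) x - 1‖} :=
                      ⟨hxK, not_lt.mp h3⟩
                    simp only [Set.indicator_of_mem m3]
                    linarith
                · have m2 : x ∈ K ∩ {x | δ m ≤ ‖ι (fq m) ((⇑α)^[nq m] x)‖} :=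
                    ⟨hxK, not_lt.mp h2⟩
                  simp only [Set.indicator_of_mem m2]
                  linarith
              · have m1 : x ∈ K ∩ {x | 2⁻¹ ≤ ‖ι (fq m) x - 1‖} :=
                  ⟨hxK, not_lt.mp h1⟩
                simp only [Set.indicator_of_mem m1]
                linarith
            · rw [Set.indicator_of_notMem hx]
              linarith
          calc |Set.indicator (K \ Es m) (fun _ => (1:ℝ)) x|
              = Set.indicator (K \ Es m) (fun _ => (1:ℝ)) x := abs_of_nonneg nt
            _ ≤ _ := hle
            _ ≤ |_| := le_abs_self _
        obtain ⟨gm, hgm1, hgm2⟩ := hsolid (e1 + e2 + e3 + e4) (Set.indicator (K \ Es m) 1)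
          (measurable_one.indicator (hKmeas.diff (by
            rw [hEs m]
            have heq : {x | x ∈ K ∧ ‖ι (fq m) x - 1‖ < 2⁻¹ ∧
                ‖ι (fq m) ((⇑α)^[nq m] x)‖ < δ m ∧ ‖ι (hq m) x - 1‖ < 2⁻¹ ∧
                ‖ι (hq m) ((⇑α.symm)^[nq m] x)‖ < δ m}
                = K ∩ ({x | ‖ι (fq m) x - 1‖ < 2⁻¹} ∩
                  ({x | ‖ι (fq m) ((⇑α)^[nq m] x)‖ < δ m} ∩
                  ({x | ‖ι (hq m) x - 1‖ < 2⁻¹} ∩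
                  {x | ‖ι (hq m) ((⇑α.symm)^[nq m] x)‖ < δ m}))) := by
              ext x
              constructor
              · rintro ⟨h0, h1, h2, h3, h4⟩; exact ⟨h0, h1, h2, h3, h4⟩
              · rintro ⟨h0, h1, h2, h3, h4⟩; exact ⟨h0, h1, h2, h3, h4⟩
            rw [heq]
            refine hKmeas.inter (MeasurableSet.inter ?_ (MeasurableSet.inter ?_
              (MeasurableSet.inter ?_ ?_)))
            · exact measurableSet_lt (((hι_meas _).sub measurable_const).norm) measurable_const
            · exact measurableSet_lt (((hι_meas _).comp (hαm.iterate _)).norm) measurable_const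
            · exact measurableSet_lt (((hι_meas _).sub measurable_const).norm) measurable_const
            · exact measurableSet_lt (((hι_meas _).comp (hσm.iterate _)).norm)
                measurable_const))) ptsum
        refine ⟨gm, hgm1, ?_⟩
        have b1 : ‖e1‖ ≤ 2 * ‖fq m - c‖ := by
          have := he1n
          rwa [norm_smul, show ‖(2:ℂ)‖ = 2 by norm_num] at this
        have b2 : ‖e2‖ ≤ (δ m)⁻¹ * ‖fq m - c‖ := by
          have := he2n
          rwa [norm_smul, Complex.norm_real, Real.norm_eq_abs,
            abs_of_pos (inv_pos.mpr (hδpos m)), hd2n] at this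
        have b3 : ‖e3‖ ≤ 2 * ‖hq m - c‖ := by
          have := he3n
          rwa [norm_smul, show ‖(2:ℂ)‖ = 2 by norm_num] at this
        have b4 : ‖e4‖ ≤ (δ m)⁻¹ * ‖hq m - c‖ := by
          have := he4n
          rwa [norm_smul, Complex.norm_real, Real.norm_eq_abs,
            abs_of_pos (inv_pos.mpr (hδpos m)), hd4n] at this
        have hb2' : (δ m)⁻¹ * ‖fq m - c‖ ≤ δ m := by
          have h5 : (δ m)⁻¹ * ‖fq m - c‖ ≤ (δ m)⁻¹ * (δ m * δ m) :=
            mul_le_mul_of_nonneg_left (hf3 m).le (inv_pos.mpr (hδpos m)).le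
          have h6 : (δ m)⁻¹ * (δ m * δ m) = δ m := by
            field_simp
          linarith
        have hb4' : (δ m)⁻¹ * ‖hq m - c‖ ≤ δ m := by
          have h5 : (δ m)⁻¹ * ‖hq m - c‖ ≤ (δ m)⁻¹ * (δ m * δ m) :=
            mul_le_mul_of_nonneg_left (hf4 m).le (inv_pos.mpr (hδpos m)).le
          have h6 : (δ m)⁻¹ * (δ m * δ m) = δ m := by
            field_simp
          linarith
        have hsn : ‖e1 + e2 + e3 + e4‖ ≤ ‖e1‖ + ‖e2‖ + ‖e3‖ + ‖e4‖ := by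
          calc ‖e1 + e2 + e3 + e4‖ ≤ ‖e1 + e2 + e3‖ + ‖e4‖ := norm_add_le _ _
            _ ≤ (‖e1 + e2‖ + ‖e3‖) + ‖e4‖ := by
              have := norm_add_le (e1 + e2) e3
              linarith
            _ ≤ (‖e1‖ + ‖e2‖ + ‖e3‖) + ‖e4‖ := by
              have := norm_add_le e1 e2
              linarith
            _ = ‖e1‖ + ‖e2‖ + ‖e3‖ + ‖e4‖ := by ring
        have := hf3 m
        have := hf4 m
        linarith
      choose gs hgs1 hgs2 using big
      refine ⟨gs, hgs1, ?_⟩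
      apply squeeze_zero (fun m => norm_nonneg _) hgs2
      have h1 : Tendsto (fun m => δ m * δ m) atTop (nhds 0) := by
        simpa using hδto.mul hδto
      have h2 := (h1.const_mul 4).add (hδto.const_mul 2)
      simpa using h2
    · -- first sup condition
      apply squeeze_zero (g := fun m => 2 * δ m) ?_ ?_ (by simpa using hδto.const_mul 2)
      · intro m
        apply Real.sSup_nonneg
        rintro y ⟨x, hx, rfl⟩
        show (0:ℝ) ≤ (nq m : ℝ) * ∏ j ∈ range (nq m), (w ((⇑α)^[j] x))⁻¹
        have : (0:ℝ) ≤ ∏ j ∈ range (nq m), (w ((⇑α)^[j] x))⁻¹ :=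
          Finset.prod_nonneg (fun j _ => (inv_pos.mpr (hw_pos _)).le)
        positivity
      · intro m
        apply Real.sSup_le ?_ (by show (0:ℝ) ≤ 2 * δ m; have := hδpos m; linarith)
        rintro y ⟨x, hx, rfl⟩
        rw [hEs m] at hx
        obtain ⟨hxK, hx1, hx2, hx3, hx4⟩ := hx
        have hlb : (2⁻¹ : ℝ) < ‖ι (hq m) x‖ := by
          have h := norm_sub_norm_le (1:ℂ) (ι (hq m) x)
          rw [norm_sub_rev, norm_one] at h
          linarith
        have heq := hnormH m x
        have hP : 0 < ∏ j ∈ range (nq m), w ((⇑α)^[j] x) :=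
          Finset.prod_pos (fun j _ => hw_pos _)
        have ha : (0:ℝ) < (nq m : ℝ) := by
          have := h1le m
          exact_mod_cast Nat.lt_of_lt_of_le Nat.zero_lt_one this
        have h5 : (2⁻¹:ℝ) < ((nq m : ℝ))⁻¹ * (∏ j ∈ range (nq m), w ((⇑α)^[j] x))
            * ‖ι (fq m) ((⇑α)^[nq m] x)‖ := by
          rw [← heq]; exact hlb
        have h7 : (nq m : ℝ) * (((nq m : ℝ))⁻¹ * (∏ j ∈ range (nq m), w ((⇑α)^[j] x))
            * ‖ι (fq m) ((⇑α)^[nq m] x)‖)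
            = (∏ j ∈ range (nq m), w ((⇑α)^[j] x)) * ‖ι (fq m) ((⇑α)^[nq m] x)‖ := by
          field_simp
        have h6 : (nq m : ℝ) * (2⁻¹:ℝ) < (∏ j ∈ range (nq m), w ((⇑α)^[j] x))
            * ‖ι (fq m) ((⇑α)^[nq m] x)‖ := by
          have := mul_lt_mul_of_pos_left h5 ha
          rwa [h7] at this
        have h8 : (∏ j ∈ range (nq m), w ((⇑α)^[j] x)) * ‖ι (fq m) ((⇑α)^[nq m] x)‖
            ≤ (∏ j ∈ range (nq m), w ((⇑α)^[j] x)) * δ m :=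
          mul_le_mul_of_nonneg_left hx2.le hP.le
        show (nq m : ℝ) * ∏ j ∈ range (nq m), (w ((⇑α)^[j] x))⁻¹ ≤ 2 * δ m
        rw [Finset.prod_inv_distrib, ← div_eq_mul_inv, div_le_iff₀ hP]
        nlinarith
    · -- second sup condition
      apply squeeze_zero (g := fun m => 2 * δ m) ?_ ?_ (by simpa using hδto.const_mul 2)
      · intro m
        apply Real.sSup_nonneg
        rintro y ⟨x, hx, rfl⟩
        show (0:ℝ) ≤ ((nq m : ℝ))⁻¹ * ∏ j ∈ Icc 1 (nq m), w ((⇑α.symm)^[j] x)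
        have : (0:ℝ) ≤ ∏ j ∈ Icc 1 (nq m), w ((⇑α.symm)^[j] x) :=
          Finset.prod_nonneg (fun j _ => (hw_pos _).le)
        positivity
      · intro m
        apply Real.sSup_le ?_ (by show (0:ℝ) ≤ 2 * δ m; have := hδpos m; linarith)
        rintro y ⟨x, hx, rfl⟩
        rw [hEs m] at hx
        obtain ⟨hxK, hx1, hx2, hx3, hx4⟩ := hx
        have hlbF : (2⁻¹ : ℝ) < ‖ι (fq m) x‖ := by
          have h := norm_sub_norm_le (1:ℂ) (ι (fq m) x)
          rw [norm_sub_rev, norm_one] at h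
          linarith
        have heq := hnormH m ((⇑α.symm)^[nq m] x)
        rw [P2, cancelF] at heq
        have hq4 : ((nq m : ℝ))⁻¹ * (∏ j ∈ Icc 1 (nq m), w ((⇑α.symm)^[j] x))
            * ‖ι (fq m) x‖ < δ m := by
          rw [← heq]; exact hx4
        have hQ : 0 < ∏ j ∈ Icc 1 (nq m), w ((⇑α.symm)^[j] x) :=
          Finset.prod_pos (fun j _ => hw_pos _)
        have ha : (0:ℝ) < (nq m : ℝ) := by
          have := h1le m
          exact_mod_cast Nat.lt_of_lt_of_le Nat.zero_lt_one this
        have hqpos : 0 < ((nq m : ℝ))⁻¹ * (∏ j ∈ Icc 1 (nq m), w ((⇑α.symm)^[j] x)) :=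
          mul_pos (inv_pos.mpr ha) hQ
        show ((nq m : ℝ))⁻¹ * ∏ j ∈ Icc 1 (nq m), w ((⇑α.symm)^[j] x) ≤ 2 * δ m
        nlinarith [mul_pos hqpos (show (0:ℝ) < ‖ι (fq m) x‖ - 2⁻¹ by linarith)]

  · -- (ii) => (i)
    intro hcond O₁ O₂ hO₁ hO₂ hO₁ne hO₂ne
    obtain ⟨f₀, ⟨⟨C₁', hC₁'⟩, K₁, hK₁, hK₁supp⟩, hf₀O₁⟩ := hdense.exists_mem_open hO₁ hO₁ne
    obtain ⟨g₀, ⟨⟨C₂', hC₂'⟩, K₂, hK₂, hK₂supp⟩, hg₀O₂⟩ := hdense.exists_mem_open hO₂ hO₂ne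
    obtain ⟨r₁, hr₁pos, hr₁⟩ := Metric.isOpen_iff.mp hO₁ f₀ hf₀O₁
    obtain ⟨r₂, hr₂pos, hr₂⟩ := Metric.isOpen_iff.mp hO₂ g₀ hg₀O₂
    have hC₁ : ∀ x, ‖ι f₀ x‖ ≤ max C₁' 0 := fun x => le_trans (hC₁' x) (le_max_left _ _)
    have hC₂ : ∀ x, ‖ι g₀ x‖ ≤ max C₂' 0 := fun x => le_trans (hC₂' x) (le_max_left _ _)
    have hC₁0 : (0:ℝ) ≤ max C₁' 0 := le_max_right _ _
    have hC₂0 : (0:ℝ) ≤ max C₂' 0 := le_max_right _ _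
    have hKc : IsCompact (K₁ ∪ K₂) := hK₁.union hK₂
    obtain ⟨E, n, hEmeas, hEK, hnmono, hn1, ⟨gs, hgs1, hgs2⟩, hsup1, hsup2⟩ :=
      hcond (K₁ ∪ K₂) hKc
    obtain ⟨c, hc⟩ := hchi (K₁ ∪ K₂) hKc
    obtain ⟨Cw, hCw⟩ := hw_bdd
    obtain ⟨Ci, hCi⟩ := hw_inv_bdd
    have hcK : ∀ x ∈ K₁ ∪ K₂, ι c x = 1 := by
      intro x hx; simp [hc, Set.indicator_of_mem hx]
    obtain ⟨M1, hM1⟩ : ∃ M1 : ℕ → ℝ, ∀ k, M1 k = sSup ((fun x => (n k : ℝ) *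
        ∏ j ∈ range (n k), (w ((⇑α)^[j] x))⁻¹) '' E k) := ⟨_, fun k => rfl⟩
    obtain ⟨M2, hM2⟩ : ∃ M2 : ℕ → ℝ, ∀ k, M2 k = sSup ((fun x => ((n k : ℝ))⁻¹ *
        ∏ j ∈ Icc 1 (n k), w ((⇑α.symm)^[j] x)) '' E k) := ⟨_, fun k => rfl⟩
    have hM1to : Tendsto M1 atTop (nhds 0) := by
      have he : M1 = fun k => sSup ((fun x => (n k : ℝ) *
          ∏ j ∈ range (n k), (w ((⇑α)^[j] x))⁻¹) '' E k) := funext hM1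
      rw [he]; exact hsup1
    have hM2to : Tendsto M2 atTop (nhds 0) := by
      have he : M2 = fun k => sSup ((fun x => ((n k : ℝ))⁻¹ *
          ∏ j ∈ Icc 1 (n k), w ((⇑α.symm)^[j] x)) '' E k) := funext hM2
      rw [he]; exact hsup2
    have hM1nn : ∀ k, 0 ≤ M1 k := by
      intro k
      rw [hM1]
      apply Real.sSup_nonneg
      rintro y ⟨x, hx, rfl⟩
      show (0:ℝ) ≤ (n k : ℝ) * ∏ j ∈ range (n k), (w ((⇑α)^[j] x))⁻¹
      have : (0:ℝ) ≤ ∏ j ∈ range (n k), (w ((⇑α)^[j] x))⁻¹ :=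
        Finset.prod_nonneg (fun j _ => (inv_pos.mpr (hw_pos _)).le)
      positivity
    have hM2nn : ∀ k, 0 ≤ M2 k := by
      intro k
      rw [hM2]
      apply Real.sSup_nonneg
      rintro y ⟨x, hx, rfl⟩
      show (0:ℝ) ≤ ((n k : ℝ))⁻¹ * ∏ j ∈ Icc 1 (n k), w ((⇑α.symm)^[j] x)
      have : (0:ℝ) ≤ ∏ j ∈ Icc 1 (n k), w ((⇑α.symm)^[j] x) :=
        Finset.prod_nonneg (fun j _ => (hw_pos _).le)
      positivity
    have hM1ub : ∀ (k : ℕ) (x : X), x ∈ E k →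
        (n k : ℝ) * ∏ j ∈ range (n k), (w ((⇑α)^[j] x))⁻¹ ≤ M1 k := by
      intro k x hx
      rw [hM1]
      apply le_csSup
      · refine ⟨(n k : ℝ) * (max Ci 1)^(n k), ?_⟩
        rintro y ⟨z, hz, rfl⟩
        show (n k : ℝ) * ∏ j ∈ range (n k), (w ((⇑α)^[j] z))⁻¹ ≤ _
        apply mul_le_mul_of_nonneg_left ?_ (Nat.cast_nonneg _)
        calc ∏ j ∈ range (n k), (w ((⇑α)^[j] z))⁻¹
            ≤ ∏ _j ∈ range (n k), max Ci 1 :=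
              Finset.prod_le_prod (fun j _ => (inv_pos.mpr (hw_pos _)).le)
                (fun j _ => le_trans (hCi _) (le_max_left _ _))
          _ = (max Ci 1)^(n k) := by rw [Finset.prod_const, Finset.card_range]
      · exact ⟨x, hx, rfl⟩
    have hM2ub : ∀ (k : ℕ) (x : X), x ∈ E k →
        ((n k : ℝ))⁻¹ * ∏ j ∈ Icc 1 (n k), w ((⇑α.symm)^[j] x) ≤ M2 k := by
      intro k x hx
      rw [hM2]
      apply le_csSup
      · refine ⟨((n k : ℝ))⁻¹ * (max Cw 1)^((Icc 1 (n k)).card), ?_⟩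
        rintro y ⟨z, hz, rfl⟩
        show ((n k : ℝ))⁻¹ * ∏ j ∈ Icc 1 (n k), w ((⇑α.symm)^[j] z) ≤ _
        apply mul_le_mul_of_nonneg_left ?_ (by positivity)
        calc ∏ j ∈ Icc 1 (n k), w ((⇑α.symm)^[j] z)
            ≤ ∏ _j ∈ Icc 1 (n k), max Cw 1 :=
              Finset.prod_le_prod (fun j _ => (hw_pos _).le)
                (fun j _ => le_trans (hCw _) (le_max_left _ _))
          _ = (max Cw 1)^((Icc 1 (n k)).card) := Finset.prod_const _
      · exact ⟨x, hx, rfl⟩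
    -- truncated elements
    have ha : ∀ k, ∃ a : 𝓕, (∀ x, ι a x = ι f₀ x * Set.indicator (E k) 1 x) ∧ ‖a‖ ≤ ‖f₀‖ := by
      intro k
      have hptw : ∀ x, ‖ι f₀ x * Set.indicator (E k) 1 x‖ ≤ ‖ι f₀ x‖ := by
        intro x
        by_cases hx : x ∈ E k
        · rw [Set.indicator_of_mem hx]
          simp
        · rw [Set.indicator_of_notMem hx]
          simp
      obtain ⟨a, h1, h2⟩ := hsolid f₀ (fun x => ι f₀ x * Set.indicator (E k) 1 x)
        ((hι_meas f₀).mul (measurable_one.indicator (hEmeas k))) hptw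
      exact ⟨a, fun x => by rw [h1], h2⟩
    have hb : ∀ k, ∃ b : 𝓕, (∀ x, ι b x = ι g₀ x * Set.indicator (E k) 1 x) ∧ ‖b‖ ≤ ‖g₀‖ := by
      intro k
      have hptw : ∀ x, ‖ι g₀ x * Set.indicator (E k) 1 x‖ ≤ ‖ι g₀ x‖ := by
        intro x
        by_cases hx : x ∈ E k
        · rw [Set.indicator_of_mem hx]
          simp
        · rw [Set.indicator_of_notMem hx]
          simp
      obtain ⟨b, h1, h2⟩ := hsolid g₀ (fun x => ι g₀ x * Set.indicator (E k) 1 x)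
        ((hι_meas g₀).mul (measurable_one.indicator (hEmeas k))) hptw
      exact ⟨b, fun x => by rw [h1], h2⟩
    choose a hae han using ha
    choose b hbe hbn using hb
    obtain ⟨cB, hcB1, hcB2⟩ : ∃ cB : ℕ → 𝓕, (∀ k, ι (cB k) = ι c ∘ (⇑α.symm)^[n k]) ∧
        ∀ k, ‖cB k‖ = ‖c‖ := by
      have h := fun k => hinvB c (n k)
      choose cB h1 h2 using h
      exact ⟨cB, h1, h2⟩
    obtain ⟨cF, hcF1, hcF2⟩ : ∃ cF : ℕ → 𝓕, (∀ k, ι (cF k) = ι c ∘ (⇑α)^[n k]) ∧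
        ∀ k, ‖cF k‖ = ‖c‖ := by
      have h := fun k => hinvF c (n k)
      choose cF h1 h2 using h
      exact ⟨cF, h1, h2⟩
    -- distance estimates for truncations
    have hb1 : ∀ k, ‖a k - f₀‖ ≤ max C₁' 0 * ‖gs k‖ := by
      intro k
      have hpt : ∀ x, ‖ι (a k - f₀) x‖ ≤ ‖ι (((max C₁' 0 : ℝ) : ℂ) • gs k) x‖ := by
        intro x
        rw [map_sub, map_smul]
        simp only [Pi.sub_apply, Pi.smul_apply, smul_eq_mul]
        rw [hae k x, hgs1 k]
        by_cases hx : x ∈ E k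
        · rw [Set.indicator_of_mem hx]
          simp only [Pi.one_apply, mul_one, sub_self, norm_zero]
          exact norm_nonneg _
        · rw [Set.indicator_of_notMem hx]
          simp only [mul_zero, zero_sub, norm_neg]
          by_cases hxK : x ∈ K₁ ∪ K₂
          · rw [Set.indicator_of_mem (Set.mem_diff_of_mem hxK hx)]
            simp only [Pi.one_apply, mul_one]
            rw [Complex.norm_real, Real.norm_eq_abs, abs_of_nonneg hC₁0]
            exact hC₁ x
          · have : ι f₀ x = 0 := hK₁supp x (fun hh => hxK (Or.inl hh))
            rw [this, norm_zero]
            exact norm_nonneg _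
      calc ‖a k - f₀‖ ≤ ‖((max C₁' 0 : ℝ) : ℂ) • gs k‖ := hdom _ _ hpt
        _ = max C₁' 0 * ‖gs k‖ := by
            rw [norm_smul, Complex.norm_real, Real.norm_eq_abs, abs_of_nonneg hC₁0]
    have hb2 : ∀ k, ‖b k - g₀‖ ≤ max C₂' 0 * ‖gs k‖ := by
      intro k
      have hpt : ∀ x, ‖ι (b k - g₀) x‖ ≤ ‖ι (((max C₂' 0 : ℝ) : ℂ) • gs k) x‖ := by
        intro x
        rw [map_sub, map_smul]
        simp only [Pi.sub_apply, Pi.smul_apply, smul_eq_mul]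
        rw [hbe k x, hgs1 k]
        by_cases hx : x ∈ E k
        · rw [Set.indicator_of_mem hx]
          simp only [Pi.one_apply, mul_one, sub_self, norm_zero]
          exact norm_nonneg _
        · rw [Set.indicator_of_notMem hx]
          simp only [mul_zero, zero_sub, norm_neg]
          by_cases hxK : x ∈ K₁ ∪ K₂
          · rw [Set.indicator_of_mem (Set.mem_diff_of_mem hxK hx)]
            simp only [Pi.one_apply, mul_one]
            rw [Complex.norm_real, Real.norm_eq_abs, abs_of_nonneg hC₂0]
            exact hC₂ x
          · have : ι g₀ x = 0 := hK₂supp x (fun hh => hxK (Or.inr hh))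
            rw [this, norm_zero]
            exact norm_nonneg _
      calc ‖b k - g₀‖ ≤ ‖((max C₂' 0 : ℝ) : ℂ) • gs k‖ := hdom _ _ hpt
        _ = max C₂' 0 * ‖gs k‖ := by
            rw [norm_smul, Complex.norm_real, Real.norm_eq_abs, abs_of_nonneg hC₂0]
    -- the key operator estimates
    have hv : ∀ k, ‖(n k : ℂ) • (S ^ (n k)) (b k)‖ ≤ max C₂' 0 * ‖c‖ * M1 k := by
      intro k
      have hpt : ∀ x, ‖ι ((n k : ℂ) • (S ^ (n k)) (b k)) x‖
          ≤ ‖ι (((max C₂' 0 * M1 k : ℝ) : ℂ) • cB k) x‖ := by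
        intro x
        rw [map_smul, map_smul]
        simp only [Pi.smul_apply, smul_eq_mul]
        rw [hSpow, hbe k, hcB1 k]
        simp only [Function.comp_apply]
        by_cases hy : (⇑α.symm)^[n k] x ∈ E k
        · rw [Set.indicator_of_mem hy]
          simp only [Pi.one_apply, mul_one]
          have hyK : (⇑α.symm)^[n k] x ∈ K₁ ∪ K₂ := hEK k hy
          rw [hcK _ hyK, mul_one]
          have hprod : 0 < ∏ j ∈ Icc 1 (n k), w ((⇑α.symm)^[j] x) :=
            Finset.prod_pos (fun j _ => hw_pos _)
          rw [show (∏ j ∈ Icc 1 (n k), ((w ((⇑α.symm)^[j] x) : ℝ) : ℂ))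
              = ((∏ j ∈ Icc 1 (n k), w ((⇑α.symm)^[j] x) : ℝ) : ℂ) by push_cast; ring,
            norm_mul, norm_mul, norm_inv, hnn, Complex.norm_real, Complex.norm_real,
            Real.norm_eq_abs, Real.norm_eq_abs, abs_of_pos hprod,
            abs_of_nonneg (mul_nonneg hC₂0 (hM1nn k))]
          have hxy : ∏ j ∈ Icc 1 (n k), w ((⇑α.symm)^[j] x)
              = ∏ j ∈ range (n k), w ((⇑α)^[j] ((⇑α.symm)^[n k] x)) := by
            have h := P1 (n k) ((⇑α.symm)^[n k] x)
            rw [cancelF] at h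
            exact h
          have e1 : (n k : ℝ) * (∏ j ∈ Icc 1 (n k), w ((⇑α.symm)^[j] x))⁻¹ ≤ M1 k := by
            rw [hxy, ← Finset.prod_inv_distrib]
            exact hM1ub k _ hy
          calc (n k : ℝ) * ((∏ j ∈ Icc 1 (n k), w ((⇑α.symm)^[j] x))⁻¹
                * ‖ι g₀ ((⇑α.symm)^[n k] x)‖)
              = ((n k : ℝ) * (∏ j ∈ Icc 1 (n k), w ((⇑α.symm)^[j] x))⁻¹)
                * ‖ι g₀ ((⇑α.symm)^[n k] x)‖ := by ring
            _ ≤ M1 k * max C₂' 0 := by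
                apply mul_le_mul e1 (hC₂ _) (norm_nonneg _) (hM1nn k)
            _ = max C₂' 0 * M1 k := by ring
        · rw [Set.indicator_of_notMem hy]
          simp only [mul_zero, norm_zero]
          exact norm_nonneg _
      calc ‖(n k : ℂ) • (S ^ (n k)) (b k)‖
          ≤ ‖((max C₂' 0 * M1 k : ℝ) : ℂ) • cB k‖ := hdom _ _ hpt
        _ = (max C₂' 0 * M1 k) * ‖c‖ := by
            rw [norm_smul, Complex.norm_real, Real.norm_eq_abs,
              abs_of_nonneg (mul_nonneg hC₂0 (hM1nn k)), hcB2 k]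
        _ = max C₂' 0 * ‖c‖ * M1 k := by ring
    have hTn : ∀ k, ‖(n k : ℂ)⁻¹ • (T ^ (n k)) (a k)‖ ≤ max C₁' 0 * ‖c‖ * M2 k := by
      intro k
      have hpt : ∀ x, ‖ι ((n k : ℂ)⁻¹ • (T ^ (n k)) (a k)) x‖
          ≤ ‖ι (((max C₁' 0 * M2 k : ℝ) : ℂ) • cF k) x‖ := by
        intro x
        rw [map_smul, map_smul]
        simp only [Pi.smul_apply, smul_eq_mul]
        rw [hTpow, hae k, hcF1 k]
        simp only [Function.comp_apply]
        by_cases hy : (⇑α)^[n k] x ∈ E k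
        · rw [Set.indicator_of_mem hy]
          simp only [Pi.one_apply, mul_one]
          have hyK : (⇑α)^[n k] x ∈ K₁ ∪ K₂ := hEK k hy
          rw [hcK _ hyK, mul_one]
          have hprod : 0 < ∏ j ∈ range (n k), w ((⇑α)^[j] x) :=
            Finset.prod_pos (fun j _ => hw_pos _)
          rw [show (∏ j ∈ range (n k), ((w ((⇑α)^[j] x) : ℝ) : ℂ))
              = ((∏ j ∈ range (n k), w ((⇑α)^[j] x) : ℝ) : ℂ) by push_cast; ring,
            norm_mul, norm_mul, norm_inv, hnn, Complex.norm_real, Complex.norm_real,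
            Real.norm_eq_abs, Real.norm_eq_abs, abs_of_pos hprod,
            abs_of_nonneg (mul_nonneg hC₁0 (hM2nn k))]
          have hxy : ∏ j ∈ range (n k), w ((⇑α)^[j] x)
              = ∏ j ∈ Icc 1 (n k), w ((⇑α.symm)^[j] ((⇑α)^[n k] x)) := by
            have h := P2 (n k) ((⇑α)^[n k] x)
            rw [cancelB] at h
            exact h
          have e1 : ((n k : ℝ))⁻¹ * (∏ j ∈ range (n k), w ((⇑α)^[j] x)) ≤ M2 k := by
            rw [hxy]
            exact hM2ub k _ hy
          calc ((n k : ℝ))⁻¹ * ((∏ j ∈ range (n k), w ((⇑α)^[j] x))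
                * ‖ι f₀ ((⇑α)^[n k] x)‖)
              = (((n k : ℝ))⁻¹ * (∏ j ∈ range (n k), w ((⇑α)^[j] x)))
                * ‖ι f₀ ((⇑α)^[n k] x)‖ := by ring
            _ ≤ M2 k * max C₁' 0 := by
                apply mul_le_mul e1 (hC₁ _) (norm_nonneg _) (hM2nn k)
            _ = max C₁' 0 * M2 k := by ring
        · rw [Set.indicator_of_notMem hy]
          simp only [mul_zero, norm_zero]
          exact norm_nonneg _
      calc ‖(n k : ℂ)⁻¹ • (T ^ (n k)) (a k)‖
          ≤ ‖((max C₁' 0 * M2 k : ℝ) : ℂ) • cF k‖ := hdom _ _ hpt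
        _ = (max C₁' 0 * M2 k) * ‖c‖ := by
            rw [norm_smul, Complex.norm_real, Real.norm_eq_abs,
              abs_of_nonneg (mul_nonneg hC₁0 (hM2nn k)), hcF2 k]
        _ = max C₁' 0 * ‖c‖ * M2 k := by ring
    -- candidate vectors
    obtain ⟨u, hu⟩ : ∃ u : ℕ → 𝓕, ∀ k, u k = a k + (n k : ℂ) • (S ^ (n k)) (b k) :=
      ⟨_, fun k => rfl⟩
    have hu1 : ∀ k, ‖u k - f₀‖ ≤ max C₁' 0 * ‖gs k‖ + max C₂' 0 * ‖c‖ * M1 k := by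
      intro k
      have hrw : u k - f₀ = (a k - f₀) + (n k : ℂ) • (S ^ (n k)) (b k) := by
        rw [hu k]; abel
      rw [hrw]
      exact le_trans (norm_add_le _ _) (add_le_add (hb1 k) (hv k))
    have hu2 : ∀ k, (n k : ℂ)⁻¹ • (T ^ (n k)) (u k)
        = ((n k : ℂ)⁻¹ • (T ^ (n k)) (a k)) + b k := by
      intro k
      have hne : (n k : ℂ) ≠ 0 := Nat.cast_ne_zero.mpr (by have := hn1 k; omega)
      rw [hu k, map_add, map_smul, hTSpow, smul_add, smul_smul, inv_mul_cancel₀ hne, one_smul]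
    have hu3 : ∀ k, ‖(n k : ℂ)⁻¹ • (T ^ (n k)) (u k) - g₀‖
        ≤ max C₁' 0 * ‖c‖ * M2 k + max C₂' 0 * ‖gs k‖ := by
      intro k
      rw [hu2 k, add_sub_assoc]
      exact le_trans (norm_add_le _ _) (add_le_add (hTn k) (hb2 k))
    -- eventual smallness
    have hB1 : Tendsto (fun k => max C₁' 0 * ‖gs k‖ + max C₂' 0 * ‖c‖ * M1 k)
        atTop (nhds 0) := by
      have h1 := hgs2.const_mul (max C₁' 0)
      have h2 := hM1to.const_mul (max C₂' 0 * ‖c‖)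
      have h3 := h1.add h2
      simpa [mul_assoc] using h3
    have hB2 : Tendsto (fun k => max C₁' 0 * ‖c‖ * M2 k + max C₂' 0 * ‖gs k‖)
        atTop (nhds 0) := by
      have h1 := hM2to.const_mul (max C₁' 0 * ‖c‖)
      have h2 := hgs2.const_mul (max C₂' 0)
      have h3 := h1.add h2
      simpa [mul_assoc] using h3
    have hev : ∀ᶠ k in atTop,
        (max C₁' 0 * ‖gs k‖ + max C₂' 0 * ‖c‖ * M1 k < min r₁ r₂) ∧
        (max C₁' 0 * ‖c‖ * M2 k + max C₂' 0 * ‖gs k‖ < min r₁ r₂) :=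
      (hB1.eventually_lt_const (lt_min hr₁pos hr₂pos)).and
        (hB2.eventually_lt_const (lt_min hr₁pos hr₂pos))
    obtain ⟨k₀, hk₀⟩ := eventually_atTop.mp hev
    refine ⟨fun k => n (k₀ + k), ?_, fun k => hn1 _, ?_⟩
    · intro i j hij
      exact hnmono (by omega)
    · intro k
      obtain ⟨h1, h2⟩ := hk₀ (k₀ + k) (by omega)
      refine ⟨u (k₀ + k), ?_, ?_⟩
      · apply hr₁
        rw [Metric.mem_ball, dist_eq_norm]
        calc ‖u (k₀ + k) - f₀‖ ≤ _ := hu1 (k₀ + k)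
          _ < min r₁ r₂ := h1
          _ ≤ r₁ := min_le_left _ _
      · apply hr₂
        rw [Metric.mem_ball, dist_eq_norm]
        calc ‖(n (k₀ + k) : ℂ)⁻¹ • (T ^ (n (k₀ + k))) (u (k₀ + k)) - g₀‖
            ≤ _ := hu3 (k₀ + k)
          _ < min r₁ r₂ := h2
          _ ≤ r₂ := min_le_right _ _
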